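/- Let λ, μ > 0 with λμ = 1, λ ≠ 1. The normalized matrix A/Tr(A), where A = x̃x̃* + Σ_{i=1}^3 ỹᵢỹᵢ* with x = I₃, y₁ = λe₁₂+μe₂₁, y₂ = λe₂₃+μe₃₂, y₃ = μe₁₃+λe₃₁, has Schmidt number exactly 2: it lies in the cone generated by {z̃z̃* : z ∈ M₃, rank z ≤ 2} but not in the cone generated by {z̃z̃* : rank z ≤ 1}. -/

import Mathlib

open Matrix BigOperators
open scoped ComplexOrder

noncomputable section

/-- vectorization `z̃` of an `m×n` matrix, as an element of `ℂ^n ⊗ ℂ^m`. -/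
def vecz {m n : ℕ} (z : Matrix (Fin m) (Fin n) ℂ) : Fin n × Fin m → ℂ :=
  fun p => z p.2 p.1

/-- the rank-one block matrix `z̃ z̃* ∈ M_n ⊗ M_m`. -/
def vv {m n : ℕ} (z : Matrix (Fin m) (Fin n) ℂ) :
    Matrix (Fin n × Fin m) (Fin n × Fin m) ℂ :=
  fun p q => vecz z p * star (vecz z q)

/-- partial (block) transpose on `M_n ⊗ M_m`. -/
def ptrans {m n : ℕ} (A : Matrix (Fin n × Fin m) (Fin n × Fin m) ℂ) :
    Matrix (Fin n × Fin m) (Fin n × Fin m) ℂ :=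
  fun p q => A (p.1, q.2) (q.1, p.2)

/-- the bilinear pairing `⟨A, φ⟩ = Σ_{i,j} Tr(φ(e_{ij}) a_{ij}ᵗ)`. -/
def pair {m n : ℕ} (A : Matrix (Fin n × Fin m) (Fin n × Fin m) ℂ)
    (φ : Matrix (Fin m) (Fin m) ℂ → Matrix (Fin n) (Fin n) ℂ) : ℂ :=
  ∑ i : Fin m, ∑ j : Fin m, ∑ k : Fin n, ∑ l : Fin n,
    φ (Matrix.single i j 1) k l * A (k, i) (l, j)

/-- `φ_V : X ↦ V* X V`. -/
def phiV {m n : ℕ} (V : Matrix (Fin m) (Fin n) ℂ) :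
    Matrix (Fin m) (Fin m) ℂ → Matrix (Fin n) (Fin n) ℂ :=
  fun X => Vᴴ * X * V

/-- `φ^W : X ↦ W* Xᵗ W`. -/
def phiW {m n : ℕ} (W : Matrix (Fin m) (Fin n) ℂ) :
    Matrix (Fin m) (Fin m) ℂ → Matrix (Fin n) (Fin n) ℂ :=
  fun X => Wᴴ * Xᵀ * W

/-- the map `Φ[a,b,c] : M₃ → M₃` of Cho–Kye–Lee. -/
def Phi (a b c : ℝ) : Matrix (Fin 3) (Fin 3) ℂ → Matrix (Fin 3) (Fin 3) ℂ :=
  fun x => Matrix.diagonal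
    ![(a : ℂ) * x 0 0 + (b : ℂ) * x 1 1 + (c : ℂ) * x 2 2,
      (a : ℂ) * x 1 1 + (b : ℂ) * x 2 2 + (c : ℂ) * x 0 0,
      (a : ℂ) * x 2 2 + (b : ℂ) * x 0 0 + (c : ℂ) * x 1 1] - x

/-- `y₁ = λe₁₂+μe₂₁`, `y₂ = λe₂₃+μe₃₂`, `y₃ = μe₁₃+λe₃₁`. -/
def yMat (lam mu : ℝ) : Fin 3 → Matrix (Fin 3) (Fin 3) ℂ :=
  ![!![0, (lam : ℂ), 0; (mu : ℂ), 0, 0; 0, 0, 0],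
    !![0, 0, 0; 0, 0, (lam : ℂ); 0, (mu : ℂ), 0],
    !![0, 0, (mu : ℂ); 0, 0, 0; (lam : ℂ), 0, 0]]

/-- the PPT entangled state `A = x̃x̃* + Σᵢ ỹᵢỹᵢ*` with `x = I₃`. -/
def Amat (lam mu : ℝ) : Matrix (Fin 3 × Fin 3) (Fin 3 × Fin 3) ℂ :=
  vv (1 : Matrix (Fin 3) (Fin 3) ℂ) + ∑ i : Fin 3, vv (yMat lam mu i)
/-- membership in the cone `V_s` generated by `{z̃z̃* : rank z ≤ s}`. -/
def InVs (s : ℕ) (A : Matrix (Fin 3 × Fin 3) (Fin 3 × Fin 3) ℂ) : Prop :=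
  ∃ (N : ℕ) (z : Fin N → Matrix (Fin 3) (Fin 3) ℂ),
    (∀ k, Matrix.rank (z k) ≤ s) ∧ A = ∑ k, vv (z k)

/-! ### Auxiliary lemmas -/

lemma rank_le_two_of_det_eq_zero (A : Matrix (Fin 3) (Fin 3) ℂ) (h : A.det = 0) :
    A.rank ≤ 2 := by
  obtain ⟨v, hv, hav⟩ := (Matrix.exists_mulVec_eq_zero_iff).mpr h
  have hv' : v ∈ LinearMap.ker A.mulVecLin := by
    simpa [Matrix.mulVecLin] using hav
  have hpos : 0 < Module.finrank ℂ (LinearMap.ker A.mulVecLin) := by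
    rw [Module.finrank_pos_iff]
    exact ⟨⟨v, hv'⟩, 0, by simpa using hv⟩
  have hsum := LinearMap.finrank_range_add_finrank_ker A.mulVecLin
  have h3 : Module.finrank ℂ (Fin 3 → ℂ) = 3 := by simp
  rw [Matrix.rank]
  omega

lemma rank_le_one_factor (z : Matrix (Fin 3) (Fin 3) ℂ) (h : z.rank ≤ 1) :
    ∃ u w : Fin 3 → ℂ, ∀ i j, z i j = u i * w j := by
  rw [Matrix.rank] at h
  obtain ⟨u, hu⟩ := ((LinearMap.range z.mulVecLin).finrank_le_one_iff_isPrincipal).mp h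
  have hcol : ∀ j, ∃ c : ℂ, c • u = z.mulVec (Pi.single j 1) := by
    intro j
    have : z.mulVec (Pi.single j 1) ∈ LinearMap.range z.mulVecLin :=
      ⟨Pi.single j 1, rfl⟩
    rw [hu] at this
    exact Submodule.mem_span_singleton.mp this
  choose w hw using hcol
  refine ⟨u, w, fun i j => ?_⟩
  have := congrFun (hw j) i
  simp [Matrix.mulVec_single] at this
  rw [← this]; ring

lemma pair_vv_phi (a b c : ℝ) (z : Matrix (Fin 3) (Fin 3) ℂ) :
    pair (vv z) (Phi a b c) =
      (a:ℂ) * (z 0 0 * star (z 0 0) + z 1 1 * star (z 1 1) + z 2 2 * star (z 2 2))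
      + (b:ℂ) * (z 1 0 * star (z 1 0) + z 2 1 * star (z 2 1) + z 0 2 * star (z 0 2))
      + (c:ℂ) * (z 0 1 * star (z 0 1) + z 1 2 * star (z 1 2) + z 2 0 * star (z 2 0))
      - (z 0 0 + z 1 1 + z 2 2) * star (z 0 0 + z 1 1 + z 2 2) := by
  simp [pair, Phi, vv, vecz, Fin.sum_univ_three, Matrix.single, Matrix.diagonal,
    Matrix.sub_apply, Matrix.of_apply]
  ring

lemma pair_add (A B : Matrix (Fin 3 × Fin 3) (Fin 3 × Fin 3) ℂ)
    (φ : Matrix (Fin 3) (Fin 3) ℂ → Matrix (Fin 3) (Fin 3) ℂ) :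
    pair (A + B) φ = pair A φ + pair B φ := by
  simp [pair, Matrix.add_apply, mul_add, Finset.sum_add_distrib]

lemma pair_smul (c : ℂ) (A : Matrix (Fin 3 × Fin 3) (Fin 3 × Fin 3) ℂ)
    (φ : Matrix (Fin 3) (Fin 3) ℂ → Matrix (Fin 3) (Fin 3) ℂ) :
    pair (c • A) φ = c * pair A φ := by
  simp [pair, Matrix.smul_apply, smul_eq_mul, Finset.mul_sum, mul_left_comm]

lemma pair_sum {N : ℕ} (B : Fin N → Matrix (Fin 3 × Fin 3) (Fin 3 × Fin 3) ℂ)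
    (φ : Matrix (Fin 3) (Fin 3) ℂ → Matrix (Fin 3) (Fin 3) ℂ) :
    pair (∑ k, B k) φ = ∑ k, pair (B k) φ :=
  map_sum (AddMonoidHom.mk' (fun A => pair A φ)
    (fun A B => pair_add A B φ)) B Finset.univ

lemma pair_A_201 (lam mu : ℝ) :
    pair (Amat lam mu) (Phi 2 0 1) = ((3*lam^2 - 3 : ℝ) : ℂ) := by
  rw [Amat, pair_add, Fin.sum_univ_three, pair_add, pair_add]
  simp [pair_vv_phi, yMat, Matrix.one_apply, Matrix.vecHead, Matrix.vecTail]
  push_cast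
  ring

lemma pair_A_210 (lam mu : ℝ) :
    pair (Amat lam mu) (Phi 2 1 0) = ((3*mu^2 - 3 : ℝ) : ℂ) := by
  rw [Amat, pair_add, Fin.sum_univ_three, pair_add, pair_add]
  simp [pair_vv_phi, yMat, Matrix.one_apply, Matrix.vecHead, Matrix.vecTail]
  push_cast
  ring

lemma trace_A (lam mu : ℝ) :
    (Amat lam mu).trace = ((3 + 3*lam^2 + 3*mu^2 : ℝ) : ℂ) := by
  simp [Matrix.trace, Amat, vv, vecz, yMat, Matrix.one_apply, Fintype.sum_prod_type,
    Fin.sum_univ_three, Matrix.add_apply, Finset.sum_apply, Complex.mul_conj]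
  push_cast
  ring

lemma choi_ineq (a0 a1 a2 b0 b1 b2 : ℝ) :
    (a0*b0+a1*b1+a2*b2)^2
      ≤ 2*((a0*b0)^2+(a1*b1)^2+(a2*b2)^2) + ((a0*b1)^2+(a1*b2)^2+(a2*b0)^2) := by
  nlinarith [sq_nonneg (a0*b0 - a1*b1), sq_nonneg (a1*b1 - a2*b2), sq_nonneg (a0*b0 - a2*b2),
    sq_nonneg (a0*b1 - a1*b0), sq_nonneg (a1*b2 - a2*b1), sq_nonneg (a2*b0 - a0*b2),
    sq_nonneg (a0*b1 - a1*b2), sq_nonneg (a1*b2 - a2*b0), sq_nonneg (a2*b0 - a0*b1)]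

lemma normSq_ineq (u w : Fin 3 → ℂ) :
    Complex.normSq (u 0 * w 0 + u 1 * w 1 + u 2 * w 2)
      ≤ 2*(Complex.normSq (u 0 * w 0) + Complex.normSq (u 1 * w 1) + Complex.normSq (u 2 * w 2))
        + (Complex.normSq (u 0 * w 1) + Complex.normSq (u 1 * w 2) + Complex.normSq (u 2 * w 0)) := by
  have habs : ‖u 0 * w 0 + u 1 * w 1 + u 2 * w 2‖
      ≤ ‖u 0‖ * ‖w 0‖ + ‖u 1‖ * ‖w 1‖
        + ‖u 2‖ * ‖w 2‖ := by
    calc ‖u 0 * w 0 + u 1 * w 1 + u 2 * w 2‖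
        ≤ ‖u 0 * w 0 + u 1 * w 1‖ + ‖u 2 * w 2‖ := norm_add_le _ _
      _ ≤ ‖u 0 * w 0‖ + ‖u 1 * w 1‖ + ‖u 2 * w 2‖ := by
          have := norm_add_le (u 0 * w 0) (u 1 * w 1); linarith
      _ = _ := by simp [norm_mul]
  have h1 : Complex.normSq (u 0 * w 0 + u 1 * w 1 + u 2 * w 2)
      ≤ (‖u 0‖ * ‖w 0‖ + ‖u 1‖ * ‖w 1‖
        + ‖u 2‖ * ‖w 2‖)^2 := by
    rw [← Complex.sq_norm]
    exact pow_le_pow_left₀ (norm_nonneg _) habs 2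
  refine h1.trans ?_
  have := choi_ineq (‖u 0‖) (‖u 1‖) (‖u 2‖)
    (‖w 0‖) (‖w 1‖) (‖w 2‖)
  simp only [← Complex.sq_norm, norm_mul]
  linarith [this]

lemma pair_pos_201 (z : Matrix (Fin 3) (Fin 3) ℂ) (h : z.rank ≤ 1) :
    0 ≤ (pair (vv z) (Phi 2 0 1)).re := by
  obtain ⟨u, w, hz⟩ := rank_le_one_factor z h
  have heq : pair (vv z) (Phi 2 0 1) =
      ((2*(Complex.normSq (u 0*w 0) + Complex.normSq (u 1*w 1) + Complex.normSq (u 2*w 2))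
        + (Complex.normSq (u 0*w 1) + Complex.normSq (u 1*w 2) + Complex.normSq (u 2*w 0))
        - Complex.normSq (u 0*w 0 + u 1*w 1 + u 2*w 2) : ℝ) : ℂ) := by
    rw [pair_vv_phi]
    simp only [hz, Complex.star_def, Complex.mul_conj]
    push_cast
    ring
  rw [heq, Complex.ofReal_re]
  have := normSq_ineq u w
  linarith

lemma pair_pos_210 (z : Matrix (Fin 3) (Fin 3) ℂ) (h : z.rank ≤ 1) :
    0 ≤ (pair (vv z) (Phi 2 1 0)).re := by
  obtain ⟨u, w, hz⟩ := rank_le_one_factor z h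
  have heq : pair (vv z) (Phi 2 1 0) =
      ((2*(Complex.normSq (u 0*w 0) + Complex.normSq (u 1*w 1) + Complex.normSq (u 2*w 2))
        + (Complex.normSq (u 1*w 0) + Complex.normSq (u 2*w 1) + Complex.normSq (u 0*w 2))
        - Complex.normSq (u 0*w 0 + u 1*w 1 + u 2*w 2) : ℝ) : ℂ) := by
    rw [pair_vv_phi]
    simp only [hz, Complex.star_def, Complex.mul_conj]
    push_cast
    ring
  rw [heq, Complex.ofReal_re]
  have key := normSq_ineq ![u 0, u 2, u 1] ![w 0, w 2, w 1]
  simp only [Matrix.cons_val_zero, Matrix.cons_val_one, Matrix.head_cons,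
    Matrix.cons_val_two, Matrix.tail_cons] at key
  rw [show u 0*w 0 + u 2*w 2 + u 1*w 1 = u 0*w 0 + u 1*w 1 + u 2*w 2 by ring] at key
  linarith

/-- matrix `αI + βy₁ + γy₂ + δy₃`. -/
def Mmk (lam mu a b g d : ℝ) : Matrix (Fin 3) (Fin 3) ℂ :=
  !![((a:ℝ):ℂ), ((b*lam:ℝ):ℂ), ((d*mu:ℝ):ℂ);
     ((b*mu:ℝ):ℂ), ((a:ℝ):ℂ), ((g*lam:ℝ):ℂ);
     ((d*lam:ℝ):ℂ), ((g*mu:ℝ):ℂ), ((a:ℝ):ℂ)]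

lemma rank_Mmk (lam mu a b g d : ℝ) (hlm : lam * mu = 1)
    (h : a^3 - a*(b^2+g^2+d^2) + b*g*d*(lam^3+mu^3) = 0) :
    (Mmk lam mu a b g d).rank ≤ 2 := by
  apply rank_le_two_of_det_eq_zero
  have hdet : (Mmk lam mu a b g d).det
      = ((a^3 - a*(b^2+g^2+d^2)*(lam*mu) + b*g*d*(lam^3+mu^3) : ℝ) : ℂ) := by
    simp [Mmk, Matrix.det_fin_three]
    push_cast
    ring
  rw [hdet, Complex.ofReal_eq_zero]
  linear_combination h - a*(b^2+g^2+d^2)*hlm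

set_option maxHeartbeats 2000000 in
/-- the state `A / Tr A` has Schmidt number exactly `2`: it lies in the cone
generated by `z̃z̃*` with `rank z ≤ 2` but not in the one with `rank z ≤ 1`. -/
theorem stmt_18 (lam mu : ℝ) (hl : 0 < lam) (hm : 0 < mu) (hlm : lam * mu = 1)
    (hne : lam ≠ 1) :
    InVs 2 ((Amat lam mu).trace⁻¹ • Amat lam mu) ∧
    ¬ InVs 1 ((Amat lam mu).trace⁻¹ • Amat lam mu) := by
  have hT : (0:ℝ) < 3 + 3*lam^2 + 3*mu^2 := by positivity
  obtain ⟨s, hs2⟩ : ∃ s : ℝ, (2*s)^2 = (3 + 3*lam^2 + 3*mu^2)⁻¹ := by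
    refine ⟨Real.sqrt (3 + 3*lam^2 + 3*mu^2)⁻¹ / 2, ?_⟩
    have h := Real.sq_sqrt (show (0:ℝ) ≤ (3 + 3*lam^2 + 3*mu^2)⁻¹ by positivity)
    nlinarith [h]
  have htrinv : (Amat lam mu).trace⁻¹ = (((2*s)^2 : ℝ) : ℂ) := by
    rw [trace_A, ← Complex.ofReal_inv, hs2]
  constructor
  · -- Schmidt number ≤ 2
    obtain ⟨t', ht'mem, ht'⟩ :
        ∃ t' ∈ Set.Icc (0:ℝ) 1, (lam^3+mu^3)*t'^3 + 3*t'^2 - 1 = 0 := by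
      have hcont : ContinuousOn (fun x : ℝ => (lam^3+mu^3)*x^3 + 3*x^2 - 1)
          (Set.Icc 0 1) := by fun_prop
      have h01 : (0:ℝ) ∈ Set.Icc ((fun x : ℝ => (lam^3+mu^3)*x^3 + 3*x^2 - 1) 0)
          ((fun x : ℝ => (lam^3+mu^3)*x^3 + 3*x^2 - 1) 1) := by
        simp only [Set.mem_Icc]
        constructor <;> nlinarith
      obtain ⟨t', ht'mem, h⟩ := intermediate_value_Icc (by norm_num : (0:ℝ) ≤ 1) hcont h01
      exact ⟨t', ht'mem, h⟩
    obtain ⟨ht'0, ht'1⟩ := Set.mem_Icc.mp ht'mem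
    obtain ⟨r, hr2⟩ : ∃ r : ℝ, r^2 = 4*(1 - t'^2) :=
      ⟨Real.sqrt _, Real.sq_sqrt (by nlinarith)⟩
    refine ⟨7, ![Mmk lam mu s (-(s*t')) (-(s*t')) (-(s*t')), Mmk lam mu s (-(s*t')) (s*t') (s*t'), Mmk lam mu s (s*t') (-(s*t')) (s*t'), Mmk lam mu s (s*t') (s*t') (-(s*t')), Mmk lam mu 0 (s*r) 0 0, Mmk lam mu 0 0 (s*r) 0, Mmk lam mu 0 0 0 (s*r)], ?_, ?_⟩
    · intro k
      fin_cases k <;>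
        refine rank_Mmk lam mu _ _ _ _ hlm ?_ <;>
        first
          | ring1
          | linear_combination (-(s^3)) * ht'
    · have hr2c : ((r:ℝ):ℂ)^2 = 4*(1 - ((t':ℝ):ℂ)^2) := by exact_mod_cast hr2
      have hsev : (∑ k : Fin 7, vv ((![Mmk lam mu s (-(s*t')) (-(s*t')) (-(s*t')), Mmk lam mu s (-(s*t')) (s*t') (s*t'), Mmk lam mu s (s*t') (-(s*t')) (s*t'), Mmk lam mu s (s*t') (s*t') (-(s*t')), Mmk lam mu 0 (s*r) 0 0, Mmk lam mu 0 0 (s*r) 0, Mmk lam mu 0 0 0 (s*r)] : Fin 7 → Matrix (Fin 3) (Fin 3) ℂ) k))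
          = vv (Mmk lam mu s (-(s*t')) (-(s*t')) (-(s*t'))) + vv (Mmk lam mu s (-(s*t')) (s*t') (s*t')) + vv (Mmk lam mu s (s*t') (-(s*t')) (s*t')) + vv (Mmk lam mu s (s*t') (s*t') (-(s*t'))) + vv (Mmk lam mu 0 (s*r) 0 0) + vv (Mmk lam mu 0 0 (s*r) 0) + vv (Mmk lam mu 0 0 0 (s*r)) := by
        rw [Fin.sum_univ_seven]
        rfl
      rw [htrinv, hsev]
      ext ⟨p1, p2⟩ ⟨q1, q2⟩
      fin_cases p1 <;> fin_cases p2 <;> fin_cases q1 <;> fin_cases q2 <;>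
        · simp only [Matrix.smul_apply, Amat, vv, vecz, yMat, Mmk, Matrix.one_apply,
            Fin.sum_univ_succ, Finset.univ_unique, Fin.default_eq_zero, Finset.sum_singleton,
            Fin.sum_univ_zero, Matrix.add_apply, Finset.sum_apply,
            Matrix.cons_val_zero, Matrix.cons_val_succ, Matrix.cons_val_one, Matrix.head_cons,
            Matrix.cons_val_two, Matrix.tail_cons, Matrix.cons_val', Matrix.head_fin_const,
            Matrix.empty_val', Matrix.cons_val_fin_one, Matrix.of_apply, smul_eq_mul,
            Matrix.vecHead, Matrix.vecTail, Function.comp_apply,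
            Complex.star_def, Complex.conj_ofReal, map_ofNat, Prod.mk.injEq]
          try push_cast
          try norm_num [Matrix.vecHead, Matrix.vecTail, Function.comp]
          try first
            | ring1
            | linear_combination (-(s:ℂ)^2*lam^2) * hr2c
            | linear_combination (-(s:ℂ)^2*mu^2) * hr2c
            | linear_combination (-(s:ℂ)^2*lam*mu) * hr2c
            | linear_combination ((s:ℂ)^2*lam^2) * hr2c
            | linear_combination ((s:ℂ)^2*mu^2) * hr2c
            | linear_combination ((s:ℂ)^2*lam*mu) * hr2c
  · -- not separable
    rintro ⟨N, z, hrk, hsum⟩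
    rcases lt_or_gt_of_ne hne with hlt | hgt
    · -- lam < 1 : use Phi 2 0 1
      have h := congrArg (fun A => (pair A (Phi 2 0 1)).re) hsum
      simp only [pair_sum] at h
      rw [pair_smul, htrinv, pair_A_201, ← Complex.ofReal_mul, Complex.ofReal_re] at h
      have hneg : (2*s)^2 * (3*lam^2 - 3) < 0 := by
        have hs2pos : 0 < (2*s)^2 := by rw [hs2]; positivity
        have : lam^2 < 1 := by nlinarith
        nlinarith
      have hpos : 0 ≤ (∑ k, pair (vv (z k)) (Phi 2 0 1)).re := by
        rw [Complex.re_sum]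
        exact Finset.sum_nonneg fun k _ => pair_pos_201 (z k) (hrk k)
      rw [← h] at hpos
      linarith
    · -- lam > 1, so mu < 1 : use Phi 2 1 0
      have hmu1 : mu < 1 := by nlinarith
      have h := congrArg (fun A => (pair A (Phi 2 1 0)).re) hsum
      simp only [pair_sum] at h
      rw [pair_smul, htrinv, pair_A_210, ← Complex.ofReal_mul, Complex.ofReal_re] at h
      have hneg : (2*s)^2 * (3*mu^2 - 3) < 0 := by
        have hs2pos : 0 < (2*s)^2 := by rw [hs2]; positivity
        have : mu^2 < 1 := by nlinarith
        nlinarith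
      have hpos : 0 ≤ (∑ k, pair (vv (z k)) (Phi 2 1 0)).re := by
        rw [Complex.re_sum]
        exact Finset.sum_nonneg fun k _ => pair_pos_210 (z k) (hrk k)
      rw [← h] at hpos
      linarith
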